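/- Suppose the sequence (W_k, Λ_k, Λ_k) generated by the ADM updates X_{k+1} = (Z_k Y_k^T + αU_k − Λ_k)(Y_k Y_k^T + αI)^{-1}, Y_{k+1} = (X_{k+1}^T X_{k+1} + βI)^{-1}(X_{k+1}^T Z_k + βV_k − Π_k), Z_{k+1} = X_{k+1}Y_{k+1} + P_Ω(M − X_{k+1}Y_{k+1}), U_{k+1} = P₊(X_{k+1} + Λ_k/α), V_{k+1} = P₊(Y_{k+1} + Π_k/β), Λ_{k+1} = Λ_k + γα(X_{k+1} − U_{k+1}), Π_{k+1} = Π_k + γβ(Y_{k+1} − V_{k+1}), converges to a limit (Ŵ, Λ̂, Π̂). Then the limit satisfies the KKT conditions of the NMFC problem: (X̂Ŷ−Ẑ)Ŷ^T + Λ̂ = 0, X̂^T(X̂Ŷ−Ẑ) + Π̂ = 0, P_{Ω^c}(X̂Ŷ−Ẑ) = 0, P_Ω(Ẑ−M) = 0, X̂ = Û, Ŷ = V̂, Λ̂ ≤ 0 ≤ Û with Λ̂⊙Û = 0, and Π̂ ≤ 0 ≤ V̂ with Π̂⊙V̂ = 0. -/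

import Mathlib

open Matrix Filter

/-- Projection onto entries in Ω. -/
def projOmega {m n : ℕ} (Ω : Finset (Fin m × Fin n)) (A : Matrix (Fin m) (Fin n) ℝ) :
    Matrix (Fin m) (Fin n) ℝ :=
  fun i j => if (i, j) ∈ Ω then A i j else 0

/-- Projection onto entries in the complement of Ω. -/
def projOmegaC {m n : ℕ} (Ω : Finset (Fin m × Fin n)) (A : Matrix (Fin m) (Fin n) ℝ) :
    Matrix (Fin m) (Fin n) ℝ :=
  fun i j => if (i, j) ∈ Ω then 0 else A i j

/-- Entrywise max with 0. -/
def projPlus {m q : ℕ} (A : Matrix (Fin m) (Fin q) ℝ) : Matrix (Fin m) (Fin q) ℝ :=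
  fun i j => max (A i j) 0

lemma tendsto_entry {a b : ℕ} {ι : Type*} {l : Filter ι}
    {A : ι → Matrix (Fin a) (Fin b) ℝ} {Ah : Matrix (Fin a) (Fin b) ℝ}
    (hA : Tendsto A l (nhds Ah)) (i : Fin a) (j : Fin b) :
    Tendsto (fun k => A k i j) l (nhds (Ah i j)) := by
  have := tendsto_pi_nhds.1 hA i
  exact tendsto_pi_nhds.1 this j

lemma tendsto_matmul {a b c : ℕ} {ι : Type*} {l : Filter ι}
    {A : ι → Matrix (Fin a) (Fin b) ℝ} {B : ι → Matrix (Fin b) (Fin c) ℝ}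
    {Ah : Matrix (Fin a) (Fin b) ℝ} {Bh : Matrix (Fin b) (Fin c) ℝ}
    (hA : Tendsto A l (nhds Ah)) (hB : Tendsto B l (nhds Bh)) :
    Tendsto (fun k => A k * B k) l (nhds (Ah * Bh)) := by
  refine tendsto_pi_nhds.2 fun i => ?_; refine tendsto_pi_nhds.2 fun j => ?_
  simp only [Matrix.mul_apply]
  exact tendsto_finset_sum _ fun p _ => (tendsto_entry hA i p).mul (tendsto_entry hB p j)

lemma tendsto_transp {a b : ℕ} {ι : Type*} {l : Filter ι}
    {A : ι → Matrix (Fin a) (Fin b) ℝ} {Ah : Matrix (Fin a) (Fin b) ℝ}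
    (hA : Tendsto A l (nhds Ah)) : Tendsto (fun k => (A k)ᵀ) l (nhds Ahᵀ) := by
  refine tendsto_pi_nhds.2 fun i => ?_; refine tendsto_pi_nhds.2 fun j => ?_
  exact tendsto_entry hA j i

lemma tendsto_msmul {a b : ℕ} {ι : Type*} {l : Filter ι} (c : ℝ)
    {A : ι → Matrix (Fin a) (Fin b) ℝ} {Ah : Matrix (Fin a) (Fin b) ℝ}
    (hA : Tendsto A l (nhds Ah)) : Tendsto (fun k => c • A k) l (nhds (c • Ah)) := by
  refine tendsto_pi_nhds.2 fun i => ?_; refine tendsto_pi_nhds.2 fun j => ?_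
  simpa [Matrix.smul_apply] using (tendsto_entry hA i j).const_mul c

lemma tendsto_madd {a b : ℕ} {ι : Type*} {l : Filter ι}
    {A B : ι → Matrix (Fin a) (Fin b) ℝ} {Ah Bh : Matrix (Fin a) (Fin b) ℝ}
    (hA : Tendsto A l (nhds Ah)) (hB : Tendsto B l (nhds Bh)) :
    Tendsto (fun k => A k + B k) l (nhds (Ah + Bh)) := by
  refine tendsto_pi_nhds.2 fun i => ?_; refine tendsto_pi_nhds.2 fun j => ?_
  exact (tendsto_entry hA i j).add (tendsto_entry hB i j)

lemma tendsto_msub {a b : ℕ} {ι : Type*} {l : Filter ι}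
    {A B : ι → Matrix (Fin a) (Fin b) ℝ} {Ah Bh : Matrix (Fin a) (Fin b) ℝ}
    (hA : Tendsto A l (nhds Ah)) (hB : Tendsto B l (nhds Bh)) :
    Tendsto (fun k => A k - B k) l (nhds (Ah - Bh)) := by
  refine tendsto_pi_nhds.2 fun i => ?_; refine tendsto_pi_nhds.2 fun j => ?_
  exact (tendsto_entry hA i j).sub (tendsto_entry hB i j)

lemma tendsto_projPlus {a b : ℕ} {ι : Type*} {l : Filter ι}
    {A : ι → Matrix (Fin a) (Fin b) ℝ} {Ah : Matrix (Fin a) (Fin b) ℝ}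
    (hA : Tendsto A l (nhds Ah)) :
    Tendsto (fun k => projPlus (A k)) l (nhds (projPlus Ah)) := by
  refine tendsto_pi_nhds.2 fun i => ?_; refine tendsto_pi_nhds.2 fun j => ?_
  exact (tendsto_entry hA i j).max tendsto_const_nhds

lemma tendsto_projOmega {a b : ℕ} {ι : Type*} {l : Filter ι} (Ω : Finset (Fin a × Fin b))
    {A : ι → Matrix (Fin a) (Fin b) ℝ} {Ah : Matrix (Fin a) (Fin b) ℝ}
    (hA : Tendsto A l (nhds Ah)) :
    Tendsto (fun k => projOmega Ω (A k)) l (nhds (projOmega Ω Ah)) := by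
  refine tendsto_pi_nhds.2 fun i => ?_; refine tendsto_pi_nhds.2 fun j => ?_
  unfold projOmega
  by_cases h : (i, j) ∈ Ω
  · simpa [h] using tendsto_entry hA i j
  · simpa [h] using tendsto_const_nhds

lemma posdef_aux {a b : ℕ} (α : ℝ) (hα : 0 < α) (A : Matrix (Fin a) (Fin b) ℝ) :
    IsUnit (A * Aᵀ + α • (1 : Matrix (Fin a) (Fin a) ℝ)).det := by
  have h1 : (A * Aᵀ).PosSemidef := by
    simpa using posSemidef_self_mul_conjTranspose A
  have h2 : (α • (1 : Matrix (Fin a) (Fin a) ℝ)).PosDef := by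
    exact Matrix.PosDef.one.smul hα
  exact (Matrix.PosDef.posSemidef_add h1 h2).det_pos.ne'.isUnit

lemma fix_max (α : ℝ) (hα : 0 < α) (u l : ℝ) (h : u = max (u + α⁻¹ * l) 0) :
    l ≤ 0 ∧ 0 ≤ u ∧ l * u = 0 := by
  have hinv : 0 < α⁻¹ := inv_pos.2 hα
  rcases le_or_gt (u + α⁻¹ * l) 0 with h1 | h1
  · rw [max_eq_right h1] at h
    subst h
    refine ⟨by nlinarith, le_refl 0, by ring⟩
  · rw [max_eq_left h1.le] at h
    have hl : l = 0 := by nlinarith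
    exact ⟨hl.le, by nlinarith, by rw [hl]; ring⟩

theorem ADM_convergent_limit_is_KKT {m q n : ℕ} (Ω : Finset (Fin m × Fin n))
    (α β γ : ℝ) (hα : 0 < α) (hβ : 0 < β) (hγ : 0 < γ) (hγ' : γ < 1.618)
    (M : Matrix (Fin m) (Fin n) ℝ)
    (X U Λ : ℕ → Matrix (Fin m) (Fin q) ℝ)
    (Y V Pm : ℕ → Matrix (Fin q) (Fin n) ℝ)
    (Z : ℕ → Matrix (Fin m) (Fin n) ℝ)
    (hX : ∀ k, X (k + 1) = (Z k * (Y k)ᵀ + α • U k - Λ k)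
        * (Y k * (Y k)ᵀ + α • (1 : Matrix (Fin q) (Fin q) ℝ))⁻¹)
    (hY : ∀ k, Y (k + 1) = ((X (k + 1))ᵀ * X (k + 1) + β • (1 : Matrix (Fin q) (Fin q) ℝ))⁻¹
        * ((X (k + 1))ᵀ * Z k + β • V k - Pm k))
    (hZ : ∀ k, Z (k + 1) = X (k + 1) * Y (k + 1) + projOmega Ω (M - X (k + 1) * Y (k + 1)))
    (hU : ∀ k, U (k + 1) = projPlus (X (k + 1) + α⁻¹ • Λ k))
    (hV : ∀ k, V (k + 1) = projPlus (Y (k + 1) + β⁻¹ • Pm k))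
    (hΛ : ∀ k, Λ (k + 1) = Λ k + (γ * α) • (X (k + 1) - U (k + 1)))
    (hPm : ∀ k, Pm (k + 1) = Pm k + (γ * β) • (Y (k + 1) - V (k + 1)))
    (Xh Uh Λh : Matrix (Fin m) (Fin q) ℝ)
    (Yh Vh Pmh : Matrix (Fin q) (Fin n) ℝ)
    (Zh : Matrix (Fin m) (Fin n) ℝ)
    (cX : Tendsto X atTop (nhds Xh)) (cY : Tendsto Y atTop (nhds Yh))
    (cZ : Tendsto Z atTop (nhds Zh)) (cU : Tendsto U atTop (nhds Uh))
    (cV : Tendsto V atTop (nhds Vh)) (cΛ : Tendsto Λ atTop (nhds Λh))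
    (cPm : Tendsto Pm atTop (nhds Pmh)) :
    (Xh * Yh - Zh) * Yhᵀ + Λh = 0 ∧
    Xhᵀ * (Xh * Yh - Zh) + Pmh = 0 ∧
    projOmegaC Ω (Xh * Yh - Zh) = 0 ∧
    projOmega Ω (Zh - M) = 0 ∧
    Xh = Uh ∧ Yh = Vh ∧
    (∀ i j, Λh i j ≤ 0) ∧ (∀ i j, 0 ≤ Uh i j) ∧ (∀ i j, Λh i j * Uh i j = 0) ∧
    (∀ i j, Pmh i j ≤ 0) ∧ (∀ i j, 0 ≤ Vh i j) ∧ (∀ i j, Pmh i j * Vh i j = 0) := by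
  have hshift : Tendsto (fun k : ℕ => k + 1) atTop atTop := tendsto_add_atTop_nat 1
  have cX1 : Tendsto (fun k => X (k + 1)) atTop (nhds Xh) := cX.comp hshift
  have cY1 : Tendsto (fun k => Y (k + 1)) atTop (nhds Yh) := cY.comp hshift
  have cZ1 : Tendsto (fun k => Z (k + 1)) atTop (nhds Zh) := cZ.comp hshift
  have cU1 : Tendsto (fun k => U (k + 1)) atTop (nhds Uh) := cU.comp hshift
  have cV1 : Tendsto (fun k => V (k + 1)) atTop (nhds Vh) := cV.comp hshift
  have cΛ1 : Tendsto (fun k => Λ (k + 1)) atTop (nhds Λh) := cΛ.comp hshift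
  have cPm1 : Tendsto (fun k => Pm (k + 1)) atTop (nhds Pmh) := cPm.comp hshift
  -- Xh = Uh
  have huX : Xh = Uh := by
    have t2 : Tendsto (fun k => Λ k + (γ * α) • (X (k + 1) - U (k + 1))) atTop
        (nhds (Λh + (γ * α) • (Xh - Uh))) :=
      tendsto_madd cΛ (tendsto_msmul _ (tendsto_msub cX1 cU1))
    have t1 : Tendsto (fun k => Λ k + (γ * α) • (X (k + 1) - U (k + 1))) atTop (nhds Λh) := by
      simpa only [← hΛ] using cΛ1
    have h0 : Λh + (γ * α) • (Xh - Uh) = Λh := tendsto_nhds_unique t2 t1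
    have h1 : (γ * α) • (Xh - Uh) = 0 := by
      have := congrArg (fun A => A - Λh) h0
      simpa [add_comm, add_sub_cancel_right] using this
    have hne : γ * α ≠ 0 := (mul_pos hγ hα).ne'
    have := (smul_eq_zero.1 h1).resolve_left hne
    exact sub_eq_zero.1 this
  -- Yh = Vh
  have huY : Yh = Vh := by
    have t2 : Tendsto (fun k => Pm k + (γ * β) • (Y (k + 1) - V (k + 1))) atTop
        (nhds (Pmh + (γ * β) • (Yh - Vh))) :=
      tendsto_madd cPm (tendsto_msmul _ (tendsto_msub cY1 cV1))
    have t1 : Tendsto (fun k => Pm k + (γ * β) • (Y (k + 1) - V (k + 1))) atTop (nhds Pmh) := by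
      simpa only [← hPm] using cPm1
    have h0 : Pmh + (γ * β) • (Yh - Vh) = Pmh := tendsto_nhds_unique t2 t1
    have h1 : (γ * β) • (Yh - Vh) = 0 := by
      have := congrArg (fun A => A - Pmh) h0
      simpa [add_comm, add_sub_cancel_right] using this
    have hne : γ * β ≠ 0 := (mul_pos hγ hβ).ne'
    have := (smul_eq_zero.1 h1).resolve_left hne
    exact sub_eq_zero.1 this
  -- limit of the U update
  have hUeq : Uh = projPlus (Xh + α⁻¹ • Λh) := by
    refine tendsto_nhds_unique cU1 ?_
    have : Tendsto (fun k => projPlus (X (k + 1) + α⁻¹ • Λ k)) atTop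
        (nhds (projPlus (Xh + α⁻¹ • Λh))) :=
      tendsto_projPlus (tendsto_madd cX1 (tendsto_msmul _ cΛ))
    simpa only [← hU] using this
  have hVeq : Vh = projPlus (Yh + β⁻¹ • Pmh) := by
    refine tendsto_nhds_unique cV1 ?_
    have : Tendsto (fun k => projPlus (Y (k + 1) + β⁻¹ • Pm k)) atTop
        (nhds (projPlus (Yh + β⁻¹ • Pmh))) :=
      tendsto_projPlus (tendsto_madd cY1 (tendsto_msmul _ cPm))
    simpa only [← hV] using this
  -- limit of the Z update
  have hZeq : Zh = Xh * Yh + projOmega Ω (M - Xh * Yh) := by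
    refine tendsto_nhds_unique cZ1 ?_
    have : Tendsto (fun k => X (k + 1) * Y (k + 1) + projOmega Ω (M - X (k + 1) * Y (k + 1)))
        atTop (nhds (Xh * Yh + projOmega Ω (M - Xh * Yh))) :=
      tendsto_madd (tendsto_matmul cX1 cY1)
        (tendsto_projOmega Ω (tendsto_msub tendsto_const_nhds (tendsto_matmul cX1 cY1)))
    simpa only [← hZ] using this
  -- limit of the X update
  have hXeq : Xh * (Yh * Yhᵀ + α • (1 : Matrix (Fin q) (Fin q) ℝ)) =
      Zh * Yhᵀ + α • Uh - Λh := by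
    have hxk : ∀ k, X (k + 1) * (Y k * (Y k)ᵀ + α • (1 : Matrix (Fin q) (Fin q) ℝ)) =
        Z k * (Y k)ᵀ + α • U k - Λ k := by
      intro k
      rw [hX k]
      exact nonsing_inv_mul_cancel_right _ _ (posdef_aux α hα (Y k))
    have t1 : Tendsto (fun k => X (k + 1) *
        (Y k * (Y k)ᵀ + α • (1 : Matrix (Fin q) (Fin q) ℝ))) atTop
        (nhds (Xh * (Yh * Yhᵀ + α • 1))) :=
      tendsto_matmul cX1 (tendsto_madd (tendsto_matmul cY (tendsto_transp cY))
        tendsto_const_nhds)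
    have t2 : Tendsto (fun k => Z k * (Y k)ᵀ + α • U k - Λ k) atTop
        (nhds (Zh * Yhᵀ + α • Uh - Λh)) :=
      tendsto_msub (tendsto_madd (tendsto_matmul cZ (tendsto_transp cY))
        (tendsto_msmul _ cU)) cΛ
    refine tendsto_nhds_unique ?_ t2
    simpa only [hxk] using t1
  -- limit of the Y update
  have hYeq : ((Xh)ᵀ * Xh + β • (1 : Matrix (Fin q) (Fin q) ℝ)) * Yh =
      Xhᵀ * Zh + β • Vh - Pmh := by
    have hyk : ∀ k, ((X (k + 1))ᵀ * X (k + 1) + β • (1 : Matrix (Fin q) (Fin q) ℝ)) * Y (k + 1)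
        = (X (k + 1))ᵀ * Z k + β • V k - Pm k := by
      intro k
      rw [hY k]
      refine mul_nonsing_inv_cancel_left _ _ ?_
      simpa using posdef_aux β hβ (X (k + 1))ᵀ
    have t1 : Tendsto (fun k => ((X (k + 1))ᵀ * X (k + 1) +
        β • (1 : Matrix (Fin q) (Fin q) ℝ)) * Y (k + 1)) atTop
        (nhds ((Xhᵀ * Xh + β • 1) * Yh)) :=
      tendsto_matmul (tendsto_madd (tendsto_matmul (tendsto_transp cX1) cX1)
        tendsto_const_nhds) cY1
    have t2 : Tendsto (fun k => (X (k + 1))ᵀ * Z k + β • V k - Pm k) atTop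
        (nhds (Xhᵀ * Zh + β • Vh - Pmh)) :=
      tendsto_msub (tendsto_madd (tendsto_matmul (tendsto_transp cX1) cZ)
        (tendsto_msmul _ cV)) cPm
    refine tendsto_nhds_unique ?_ t2
    simpa only [hyk] using t1
  -- first KKT equation
  have kkt1 : (Xh * Yh - Zh) * Yhᵀ + Λh = 0 := by
    rw [Matrix.mul_add, Matrix.mul_smul, Matrix.mul_one] at hXeq
    rw [← huX] at hXeq
    have heq : Xh * (Yh * Yhᵀ) = Zh * Yhᵀ - Λh := by
      have h2 : Xh * (Yh * Yhᵀ) + α • Xh = (Zh * Yhᵀ - Λh) + α • Xh := by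
        rw [hXeq]; abel
      exact add_right_cancel h2
    rw [Matrix.sub_mul, Matrix.mul_assoc, heq]
    abel
  have kkt2 : Xhᵀ * (Xh * Yh - Zh) + Pmh = 0 := by
    rw [Matrix.add_mul, Matrix.smul_mul, Matrix.one_mul] at hYeq
    rw [← huY] at hYeq
    have heq : Xhᵀ * Xh * Yh = Xhᵀ * Zh - Pmh := by
      have h2 : Xhᵀ * Xh * Yh + β • Yh = (Xhᵀ * Zh - Pmh) + β • Yh := by
        rw [hYeq]; abel
      exact add_right_cancel h2
    rw [Matrix.mul_sub, ← Matrix.mul_assoc, heq]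
    abel
  -- projection equations
  have kkt3 : projOmegaC Ω (Xh * Yh - Zh) = 0 := by
    funext i j
    have hz := congrFun (congrFun hZeq i) j
    simp only [Matrix.add_apply, projOmega] at hz
    unfold projOmegaC
    by_cases h : (i, j) ∈ Ω
    · simp [h]
    · simp only [h, if_false, if_true, Matrix.sub_apply, Matrix.zero_apply]
      simp [h] at hz
      simp [hz]
  have kkt4 : projOmega Ω (Zh - M) = 0 := by
    funext i j
    have hz := congrFun (congrFun hZeq i) j
    simp only [Matrix.add_apply, projOmega] at hz
    unfold projOmega
    by_cases h : (i, j) ∈ Ω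
    · simp only [h, if_true, Matrix.sub_apply, Matrix.zero_apply]
      simp [h, Matrix.sub_apply] at hz
      rw [hz]; ring
    · simp [h]
  -- complementarity for (Λh, Uh)
  have compU : ∀ i j, Λh i j ≤ 0 ∧ 0 ≤ Uh i j ∧ Λh i j * Uh i j = 0 := by
    intro i j
    have h := congrFun (congrFun hUeq i) j
    rw [huX] at h
    simp only [projPlus, Matrix.add_apply, Matrix.smul_apply, smul_eq_mul] at h
    exact fix_max α hα _ _ h
  have compV : ∀ i j, Pmh i j ≤ 0 ∧ 0 ≤ Vh i j ∧ Pmh i j * Vh i j = 0 := by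
    intro i j
    have h := congrFun (congrFun hVeq i) j
    rw [huY] at h
    simp only [projPlus, Matrix.add_apply, Matrix.smul_apply, smul_eq_mul] at h
    exact fix_max β hβ _ _ h
  exact ⟨kkt1, kkt2, kkt3, kkt4, huX, huY,
    fun i j => (compU i j).1, fun i j => (compU i j).2.1, fun i j => (compU i j).2.2,
    fun i j => (compV i j).1, fun i j => (compV i j).2.1, fun i j => (compV i j).2.2⟩
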